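/- Let V be a finite-dimensional real vector space. The Lie algebra L = V ⊕ End(V) ⊕ V* with bracket [(X,A,α),(Y,B,β)] = (A Y − B X, A∘B − B∘A + ⟨X,β⟩ − ⟨Y,α⟩, α∘B − β∘A), where ⟨Z,γ⟩ ∈ End(V) is the endomorphism W ↦ γ(Z)W + γ(W)Z, is isomorphic as a Lie algebra to the Lie algebra of trace-zero endomorphisms of ℝ × V (with the commutator bracket). -/

import Mathlib

open LinearMap

/-- For `Z ∈ V` and `γ ∈ V*`, the endomorphism `⟨Z,γ⟩ : W ↦ γ(Z)•W + γ(W)•Z`. -/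
noncomputable def pairEnd {V : Type*} [AddCommGroup V] [Module ℝ V]
    (Z : V) (γ : V →ₗ[ℝ] ℝ) : Module.End ℝ V :=
  γ Z • LinearMap.id + LinearMap.smulRight γ Z

/-- The bracket on `L = V ⊕ End(V) ⊕ V*`:
`[(X,A,α),(Y,B,β)] = (A Y − B X, A∘B − B∘A + ⟨X,β⟩ − ⟨Y,α⟩, α∘B − β∘A)`. -/
noncomputable def bkt {V : Type*} [AddCommGroup V] [Module ℝ V]
    (p q : V × Module.End ℝ V × (V →ₗ[ℝ] ℝ)) :
    V × Module.End ℝ V × (V →ₗ[ℝ] ℝ) :=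
  (p.2.1 q.1 - q.2.1 p.1,
   p.2.1 * q.2.1 - q.2.1 * p.2.1 + pairEnd p.1 q.2.2 - pairEnd q.1 p.2.2,
   p.2.2 ∘ₗ q.2.1 - q.2.2 ∘ₗ p.2.1)

set_option linter.unusedSectionVars false
set_option maxHeartbeats 1000000

open Module

noncomputable section BktAux
namespace BktAux

variable {V : Type*} [AddCommGroup V] [Module ℝ V] [FiniteDimensional ℝ V]

/-- normalizing constant -/
def cc (A : Module.End ℝ V) : ℝ := -(trace ℝ V A) / (finrank ℝ V + 1)

lemma cc_add (A B : Module.End ℝ V) : cc (A + B) = cc A + cc B := by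
  simp [cc]; ring

lemma cc_smul (r : ℝ) (A : Module.End ℝ V) : cc (r • A) = r * cc A := by
  simp [cc]; ring

lemma trace_R (f : ℝ →ₗ[ℝ] ℝ) : trace ℝ ℝ f = f 1 := by
  have h : f = f 1 • LinearMap.id := by ext; simp [mul_comm]
  rw [h, map_smul, trace_id]; simp

lemma trace_decomp (M : Module.End ℝ (ℝ × V)) :
    trace ℝ (ℝ × V) M
      = (M (1, 0)).1 + trace ℝ V (snd ℝ ℝ V ∘ₗ M ∘ₗ inr ℝ ℝ V) := by
  have hM : M = inl ℝ ℝ V ∘ₗ (fst ℝ ℝ V ∘ₗ M) + inr ℝ ℝ V ∘ₗ (snd ℝ ℝ V ∘ₗ M) := by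
    apply LinearMap.ext; intro x
    simp [Prod.ext_iff]
  conv_lhs => rw [hM]
  rw [map_add, trace_comp_comm' (fst ℝ ℝ V ∘ₗ M) (inl ℝ ℝ V),
    trace_comp_comm' (snd ℝ ℝ V ∘ₗ M) (inr ℝ ℝ V)]
  congr 1
  rw [comp_assoc, trace_R]; simp

lemma trace_pairEnd (Z : V) (γ : V →ₗ[ℝ] ℝ) :
    trace ℝ V (pairEnd Z γ) = ((finrank ℝ V : ℝ) + 1) * γ Z := by
  have h1 : LinearMap.smulRight γ Z = toSpanSingleton ℝ V Z ∘ₗ γ := by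
    apply LinearMap.ext; intro v; simp [toSpanSingleton]
  rw [pairEnd, map_add, map_smul, trace_id, h1, trace_comp_comm', trace_R]
  simp [toSpanSingleton]
  ring

/-- The forward map. -/
def Fmap (p : V × Module.End ℝ V × (V →ₗ[ℝ] ℝ)) : Module.End ℝ (ℝ × V) :=
  LinearMap.prod
    (cc p.2.1 • fst ℝ ℝ V + p.2.2 ∘ₗ snd ℝ ℝ V)
    (toSpanSingleton ℝ V p.1 ∘ₗ fst ℝ ℝ V + (p.2.1 + cc p.2.1 • LinearMap.id) ∘ₗ snd ℝ ℝ V)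

lemma Fmap_apply (p : V × Module.End ℝ V × (V →ₗ[ℝ] ℝ)) (t : ℝ) (v : V) :
    Fmap p (t, v) = (cc p.2.1 * t + p.2.2 v, t • p.1 + p.2.1 v + cc p.2.1 • v) := by
  simp [Fmap, toSpanSingleton, add_assoc]

lemma trace_Fmap (p : V × Module.End ℝ V × (V →ₗ[ℝ] ℝ)) :
    trace ℝ (ℝ × V) (Fmap p) = 0 := by
  rw [trace_decomp]
  have h2 : snd ℝ ℝ V ∘ₗ Fmap p ∘ₗ inr ℝ ℝ V = p.2.1 + cc p.2.1 • LinearMap.id := by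
    apply LinearMap.ext; intro v
    simp [Fmap_apply]
  rw [h2, Fmap_apply]
  simp [cc]
  field_simp
  ring

/-- Bundled forward map. -/
def Fl : (V × Module.End ℝ V × (V →ₗ[ℝ] ℝ)) →ₗ[ℝ] Module.End ℝ (ℝ × V) where
  toFun := Fmap
  map_add' p q := by
    apply LinearMap.ext; rintro ⟨t, v⟩
    simp [Fmap_apply, cc_add, Prod.ext_iff]
    constructor
    · ring
    · module
  map_smul' r p := by
    apply LinearMap.ext; rintro ⟨t, v⟩
    simp [Fmap_apply, cc_smul, Prod.ext_iff, smul_smul]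
    constructor
    · ring
    · module

/-- Bundled inverse map. -/
def Gl : Module.End ℝ (ℝ × V) →ₗ[ℝ] (V × Module.End ℝ V × (V →ₗ[ℝ] ℝ)) where
  toFun M := ((M (1, 0)).2,
    (snd ℝ ℝ V ∘ₗ M ∘ₗ inr ℝ ℝ V) - (M (1, 0)).1 • LinearMap.id,
    fst ℝ ℝ V ∘ₗ M ∘ₗ inr ℝ ℝ V)
  map_add' M N := by
    refine Prod.ext ?_ (Prod.ext ?_ ?_)
    · simp
    · apply LinearMap.ext; intro v; simp [add_smul]; abel
    · apply LinearMap.ext; intro v; simp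
  map_smul' r M := by
    refine Prod.ext ?_ (Prod.ext ?_ ?_)
    · simp
    · apply LinearMap.ext; intro v; simp [smul_smul, mul_comm]; module
    · apply LinearMap.ext; intro v; simp

def F' : (V × Module.End ℝ V × (V →ₗ[ℝ] ℝ)) →ₗ[ℝ] ker (trace ℝ (ℝ × V)) :=
  Fl.codRestrict _ fun p => by rw [mem_ker]; exact trace_Fmap p

def G' : (ker (trace ℝ (ℝ × V)) : Submodule ℝ (Module.End ℝ (ℝ × V))) →ₗ[ℝ]
    (V × Module.End ℝ V × (V →ₗ[ℝ] ℝ)) :=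
  Gl ∘ₗ (ker (trace ℝ (ℝ × V))).subtype

lemma gf : G' ∘ₗ (F' : (V × Module.End ℝ V × (V →ₗ[ℝ] ℝ)) →ₗ[ℝ] _) = LinearMap.id := by
  apply LinearMap.ext; intro p
  show Gl (Fmap p) = p
  refine Prod.ext ?_ (Prod.ext ?_ ?_)
  · simp [Gl, Fmap_apply]
  · apply LinearMap.ext; intro v; simp [Gl, Fmap_apply]
  · apply LinearMap.ext; intro v; simp [Gl, Fmap_apply]

lemma fg : F' ∘ₗ (G' : _ →ₗ[ℝ] (V × Module.End ℝ V × (V →ₗ[ℝ] ℝ))) = LinearMap.id := by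
  apply LinearMap.ext; intro M
  apply Subtype.ext
  show Fmap (Gl M.1) = M.1
  have hM : trace ℝ (ℝ × V) M.1 = 0 := M.2
  rw [trace_decomp] at hM
  have ha : cc ((snd ℝ ℝ V ∘ₗ M.1 ∘ₗ inr ℝ ℝ V) - (M.1 (1, 0)).1 • LinearMap.id)
      = (M.1 (1, 0)).1 := by
    simp only [cc, map_sub, map_smul, trace_id, smul_eq_mul]
    field_simp
    linarith
  apply LinearMap.ext; rintro ⟨t, v⟩
  have hx : ((t, v) : ℝ × V) = t • ((1 : ℝ), (0 : V)) + ((0 : ℝ), v) := by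
    simp
  conv_rhs => rw [hx, map_add, map_smul]
  rw [show Gl M.1 = ((M.1 (1, 0)).2,
    (snd ℝ ℝ V ∘ₗ M.1 ∘ₗ inr ℝ ℝ V) - (M.1 (1, 0)).1 • LinearMap.id,
    fst ℝ ℝ V ∘ₗ M.1 ∘ₗ inr ℝ ℝ V) from rfl, Fmap_apply]
  simp only [ha]
  refine Prod.ext ?_ ?_
  · simp [mul_comm]
  · simp
    module

def e : (V × Module.End ℝ V × (V →ₗ[ℝ] ℝ)) ≃ₗ[ℝ] ker (trace ℝ (ℝ × V)) :=
  LinearEquiv.ofLinear F' G' fg gf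

lemma cc_bkt (p q : V × Module.End ℝ V × (V →ₗ[ℝ] ℝ)) :
    cc (bkt p q).2.1 = p.2.2 q.1 - q.2.2 p.1 := by
  simp only [bkt, cc, map_sub, map_add, trace_pairEnd, trace_mul_comm]
  field_simp
  ring

lemma Fmap_bkt (p q : V × Module.End ℝ V × (V →ₗ[ℝ] ℝ)) :
    Fmap (bkt p q) = Fmap p * Fmap q - Fmap q * Fmap p := by
  apply LinearMap.ext; rintro ⟨t, v⟩
  rw [show (Fmap p * Fmap q - Fmap q * Fmap p) (t, v)
      = Fmap p (Fmap q (t, v)) - Fmap q (Fmap p (t, v)) from rfl]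
  rw [Fmap_apply p, Fmap_apply q, Fmap_apply p, Fmap_apply q, Fmap_apply, cc_bkt]
  have h1 : (bkt p q).1 = p.2.1 q.1 - q.2.1 p.1 := rfl
  have h2 : (bkt p q).2.1
      = p.2.1 * q.2.1 - q.2.1 * p.2.1 + pairEnd p.1 q.2.2 - pairEnd q.1 p.2.2 := rfl
  have h3 : (bkt p q).2.2 = p.2.2 ∘ₗ q.2.1 - q.2.2 ∘ₗ p.2.1 := rfl
  rw [h1, h2, h3]
  refine Prod.ext ?_ ?_
  · simp [pairEnd, Module.End.mul_apply]
    ring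
  · simp [pairEnd, Module.End.mul_apply, smul_sub, smul_add, sub_smul, add_smul, smul_smul]
    module

end BktAux
end BktAux

/-- The Lie algebra `L = V ⊕ End(V) ⊕ V*` is isomorphic to the Lie algebra of trace-zero
endomorphisms of `ℝ × V` with the commutator bracket: there is a linear equivalence onto
`sl(ℝ × V) = ker(trace)` carrying `bkt` to the commutator. -/
theorem bkt_iso_sl {V : Type*} [AddCommGroup V] [Module ℝ V] [FiniteDimensional ℝ V] :
    ∃ e : (V × Module.End ℝ V × (V →ₗ[ℝ] ℝ)) ≃ₗ[ℝ]
        LinearMap.ker (LinearMap.trace ℝ (ℝ × V)),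
      ∀ p q : V × Module.End ℝ V × (V →ₗ[ℝ] ℝ),
        (e (bkt p q) : Module.End ℝ (ℝ × V)) =
          (e p : Module.End ℝ (ℝ × V)) * (e q : Module.End ℝ (ℝ × V)) -
          (e q : Module.End ℝ (ℝ × V)) * (e p : Module.End ℝ (ℝ × V)) := by
  refine ⟨BktAux.e, fun p q => ?_⟩
  have h : ∀ r : V × Module.End ℝ V × (V →ₗ[ℝ] ℝ),
      ((BktAux.e r : LinearMap.ker (LinearMap.trace ℝ (ℝ × V))) : Module.End ℝ (ℝ × V))
        = BktAux.Fmap r := fun r => rfl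
  rw [h, h, h, BktAux.Fmap_bkt]
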